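/- Let q' = p^f. For each 0 ≤ l < q', let ρ̄_l denote the restriction to SL_2(F_{q'}) of the representation ρ_l^I = ρ_{l_0} ⊗ ρ_{l_1}^{(1)} ⊗ ... ⊗ ρ_{l_s}^{(s)} over F_{q'}, where l = l_0 + l_1 p + ... + l_s p^s is the base-p expansion. Then ρ̄_l is irreducible. -/

import Mathlib

open Polynomial

/-- The matrix of the `r`-th symmetric power `ρ_r` of the tautological representation of
`GL_2(B)`, in the basis `X^{r-i}Y^i`. -/
noncomputable def symPowMat {B : Type*} [CommRing B] (r : ℕ) (g : Matrix (Fin 2) (Fin 2) B) :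
    Matrix (Fin (r + 1)) (Fin (r + 1)) B :=
  Matrix.of fun j i =>
    (((C (g 0 0)) * X + C (g 1 0)) ^ (r - (i : ℕ)) *
        ((C (g 0 1)) * X + C (g 1 1)) ^ (i : ℕ)).coeff (r - (j : ℕ))

/-- Index set of `ρ_l^I = ρ_{l_0} ⊗ ρ_{l_1}^{(1)} ⊗ ⋯ ⊗ ρ_{l_s}^{(s)}`. -/
abbrev tensorIdx (p l : ℕ) := (i : Fin (Nat.digits p l).length) → Fin ((Nat.digits p l).get i + 1)

/-- The matrix of `ρ_l^I = ρ_{l_0} ⊗ ρ_{l_1}^{(1)} ⊗ ⋯ ⊗ ρ_{l_s}^{(s)}` (Frobenius twists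
entrywise by `p^i`-th powers). -/
noncomputable def rhoTensor {B : Type*} [CommRing B] (p l : ℕ) (g : Matrix (Fin 2) (Fin 2) B) :
    Matrix (tensorIdx p l) (tensorIdx p l) B :=
  Matrix.of fun j i =>
    ∏ k : Fin (Nat.digits p l).length,
      symPowMat ((Nat.digits p l).get k) (g.map (· ^ p ^ (k : ℕ))) (j k) (i k)

open Finset


lemma vand_extract {F M : Type*} [Field F] [Fintype F] [DecidableEq F]
    [AddCommGroup M] [Module F M]
    (V : Submodule F M) (N : ℕ) (hN : N < Fintype.card F) (w : ℕ → M)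
    (h : ∀ x : F, (∑ d ∈ Finset.range (N + 1), x ^ d • w d) ∈ V) :
    ∀ d ≤ N, w d ∈ V := by
  obtain ⟨v⟩ : Nonempty (Fin (N + 1) ↪ F) := by
    apply Function.Embedding.nonempty_of_card_le
    simpa [Fintype.card_fin] using hN
  set A := Matrix.vandermonde (v ·) with hA
  have hdet : IsUnit A.det := by
    rw [isUnit_iff_ne_zero, Matrix.det_vandermonde_ne_zero_iff]
    exact v.injective
  have hinv : A⁻¹ * A = 1 := Matrix.nonsing_inv_mul A hdet
  intro d hd
  have key : w d = ∑ i : Fin (N + 1), A⁻¹ ⟨d, Nat.lt_succ_of_le hd⟩ i •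
      (∑ j : Fin (N + 1), A i j • w j.val) := by
    simp only [Finset.smul_sum, smul_smul]
    rw [Finset.sum_comm]
    have : ∀ j : Fin (N+1), ∑ i : Fin (N+1),
        (A⁻¹ ⟨d, Nat.lt_succ_of_le hd⟩ i * A i j) • w j.val
        = ((1 : Matrix (Fin (N+1)) (Fin (N+1)) F) ⟨d, Nat.lt_succ_of_le hd⟩ j) • w j.val := by
      intro j
      rw [← Finset.sum_smul, ← Matrix.mul_apply, hinv]
    rw [Finset.sum_congr rfl fun j _ => this j]
    simp only [Matrix.one_apply]
    rw [Finset.sum_eq_single (⟨d, Nat.lt_succ_of_le hd⟩ : Fin (N+1))]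
    · simp
    · intro j _ hj
      simp [Ne.symm hj]
    · intro hmem
      exact absurd (Finset.mem_univ _) hmem
  rw [key]
  refine Submodule.sum_smul_mem V _ fun i _ => ?_
  have := h (v i)
  rw [Finset.sum_range] at this
  convert this using 2
  simp [hA, Matrix.vandermonde_apply]

lemma coeff_C_mul_X_add_one_pow {F : Type*} [CommRing F] (x : F) (n m : ℕ) :
    ((C x * X + 1) ^ n).coeff m = (n.choose m : F) * x ^ m := by
  rw [add_pow, Polynomial.finset_sum_coeff]
  have : ∀ k ∈ Finset.range (n+1),
      ((C x * X) ^ k * 1 ^ (n - k) * (n.choose k : F[X])).coeff m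
      = if m = k then x ^ k * (n.choose k : F) else 0 := by
    intro k _
    rw [one_pow, mul_one, mul_pow, ← C_pow, ← Polynomial.C_eq_natCast, mul_right_comm,
      ← C_mul, coeff_C_mul, coeff_X_pow]
    rw [mul_ite, mul_one, mul_zero, mul_comm]
  rw [Finset.sum_congr rfl this, Finset.sum_ite_eq]
  rcases le_or_gt m n with h | h
  · rw [if_pos (Finset.mem_range.mpr (by omega)), mul_comm]
  · rw [if_neg (by simp; omega), Nat.choose_eq_zero_of_lt h, Nat.cast_zero, zero_mul]

lemma symPow_lower {F : Type*} [CommRing F] (r : ℕ) (x : F) (j i : Fin (r+1)) :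
    symPowMat r !![1, 0; x, 1] j i
      = ((r - (i:ℕ)).choose (r - (j:ℕ)) : F) * x ^ ((j:ℕ) - (i:ℕ)) := by
  have hi : (i:ℕ) ≤ r := Nat.lt_succ_iff.mp i.isLt
  have hj : (j:ℕ) ≤ r := Nat.lt_succ_iff.mp j.isLt
  simp only [symPowMat, Matrix.of_apply, Matrix.cons_val', Matrix.cons_val_zero,
    Matrix.cons_val_one, Matrix.head_cons, Matrix.head_fin_const, Matrix.empty_val',
    Matrix.cons_val_fin_one]
  rw [map_one, map_zero, one_mul, zero_mul, zero_add, one_pow, mul_one, coeff_X_add_C_pow]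
  rcases le_or_gt (i:ℕ) (j:ℕ) with h | h
  · rw [show r - (i:ℕ) - (r - (j:ℕ)) = (j:ℕ) - (i:ℕ) from by omega, mul_comm]
  · rw [Nat.choose_eq_zero_of_lt (by omega), Nat.cast_zero, zero_mul, mul_zero]

lemma symPow_upper {F : Type*} [CommRing F] (r : ℕ) (x : F) (j i : Fin (r+1)) :
    symPowMat r !![1, x; 0, 1] j i
      = ((i:ℕ).choose (j:ℕ) : F) * x ^ ((i:ℕ) - (j:ℕ)) := by
  have hi : (i:ℕ) ≤ r := Nat.lt_succ_iff.mp i.isLt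
  have hj : (j:ℕ) ≤ r := Nat.lt_succ_iff.mp j.isLt
  simp only [symPowMat, Matrix.of_apply, Matrix.cons_val', Matrix.cons_val_zero,
    Matrix.cons_val_one, Matrix.head_cons, Matrix.head_fin_const, Matrix.empty_val',
    Matrix.cons_val_fin_one]
  rw [map_one, map_zero, one_mul, add_zero, mul_comm, coeff_mul_X_pow',
    coeff_C_mul_X_add_one_pow]
  rcases le_or_gt (j:ℕ) (i:ℕ) with h | h
  · rw [if_pos (by omega), show r - (j:ℕ) - (r - (i:ℕ)) = (i:ℕ) - (j:ℕ) from by omega, Nat.choose_symm h]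
  · rw [if_neg (by omega), Nat.choose_eq_zero_of_lt h, Nat.cast_zero, zero_mul]


lemma ofDigits_fin (b : ℕ) (L : List ℕ) :
    ∑ k : Fin L.length, L.get k * b ^ (k : ℕ) = Nat.ofDigits b L := by
  induction L with
  | nil => simp [Nat.ofDigits]
  | cons d t ih =>
    rw [Nat.ofDigits_cons, ← ih]
    show ∑ k : Fin (t.length+1), (d :: t).get k * b ^ (k:ℕ)
        = d + b * ∑ k : Fin t.length, t.get k * b ^ (k:ℕ)
    rw [Fin.sum_univ_succ]
    simp only [List.get_cons_zero, Fin.val_zero, pow_zero, mul_one, Fin.val_succ, List.get_cons_succ]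
    congr 1
    rw [Finset.mul_sum]
    refine Finset.sum_congr rfl fun k _ => ?_
    rw [pow_succ]
    show t.get k * (b ^ (k:ℕ) * b) = b * (t.get k * b ^ (k:ℕ))
    ring

lemma base_p_fin_inj {p : ℕ} (hp : 2 ≤ p) : ∀ {s : ℕ} (f g : Fin s → ℕ),
    (∀ k, f k < p) → (∀ k, g k < p) →
    (∑ k, f k * p ^ (k : ℕ)) = (∑ k, g k * p ^ (k : ℕ)) → f = g := by
  intro s
  induction s with
  | zero => intro f g _ _ _; funext k; exact absurd k.isLt (by omega)
  | succ s ih =>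
    intro f g hf hg h
    rw [Fin.sum_univ_succ, Fin.sum_univ_succ] at h
    simp only [Fin.val_zero, pow_zero, mul_one, Fin.val_succ] at h
    have hre : ∀ (u : Fin (s+1) → ℕ), ∑ k : Fin s, u k.succ * p ^ ((k:ℕ) + 1)
        = (∑ k : Fin s, u k.succ * p ^ (k:ℕ)) * p := by
      intro u
      rw [Finset.sum_mul]
      exact Finset.sum_congr rfl fun k _ => by rw [pow_succ]; ring
    rw [hre f, hre g] at h
    have h0 : f 0 = g 0 := by
      have := congrArg (· % p) h
      simpa [Nat.add_mul_mod_self_right, Nat.mod_eq_of_lt (hf 0), Nat.mod_eq_of_lt (hg 0)]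
        using this
    have h1 : ∑ k : Fin s, f k.succ * p ^ (k:ℕ) = ∑ k : Fin s, g k.succ * p ^ (k:ℕ) := by
      have hp0 : 0 < p := by omega
      have := h
      rw [h0] at this
      have := Nat.add_left_cancel this
      exact Nat.eq_of_mul_eq_mul_right hp0 this
    have := ih (fun k => f k.succ) (fun k => g k.succ) (fun k => hf _) (fun k => hg _) h1
    funext k
    refine Fin.cases h0 (fun k' => ?_) k
    exact congrFun this k'

lemma map_lower {F : Type*} [CommRing F] (x : F) (e : ℕ) (he : e ≠ 0) :
    (!![1, 0; x, 1] : Matrix (Fin 2) (Fin 2) F).map (· ^ e) = !![1, 0; x ^ e, 1] := by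
  ext a b
  fin_cases a <;> fin_cases b <;>
    simp [Matrix.map_apply, one_pow, zero_pow he]

lemma map_upper {F : Type*} [CommRing F] (x : F) (e : ℕ) (he : e ≠ 0) :
    (!![1, x; 0, 1] : Matrix (Fin 2) (Fin 2) F).map (· ^ e) = !![1, x ^ e; 0, 1] := by
  ext a b
  fin_cases a <;> fin_cases b <;>
    simp [Matrix.map_apply, one_pow, zero_pow he]

lemma rho_lower {F : Type*} [CommRing F] (p l : ℕ) (hp : 2 ≤ p) (x : F)
    (j i : tensorIdx p l) :
    rhoTensor p l !![1, 0; x, 1] j i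
      = (∏ k : Fin (Nat.digits p l).length,
          (((Nat.digits p l).get k - (i k : ℕ)).choose ((Nat.digits p l).get k - (j k : ℕ)) : F))
        * x ^ (∑ k : Fin (Nat.digits p l).length, ((j k : ℕ) - (i k : ℕ)) * p ^ (k : ℕ)) := by
  have hpe : ∀ k : ℕ, p ^ k ≠ 0 := fun k => pow_ne_zero k (by omega)
  show (∏ k, symPowMat _ _ (j k) (i k)) = _
  rw [← Finset.prod_pow_eq_pow_sum, ← Finset.prod_mul_distrib]
  refine Finset.prod_congr rfl fun k _ => ?_
  rw [map_lower x _ (hpe k), symPow_lower, ← pow_mul']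

lemma rho_upper {F : Type*} [CommRing F] (p l : ℕ) (hp : 2 ≤ p) (x : F)
    (j i : tensorIdx p l) :
    rhoTensor p l !![1, x; 0, 1] j i
      = (∏ k : Fin (Nat.digits p l).length, ((i k : ℕ).choose (j k : ℕ) : F))
        * x ^ (∑ k : Fin (Nat.digits p l).length, ((i k : ℕ) - (j k : ℕ)) * p ^ (k : ℕ)) := by
  have hpe : ∀ k : ℕ, p ^ k ≠ 0 := fun k => pow_ne_zero k (by omega)
  show (∏ k, symPowMat _ _ (j k) (i k)) = _
  rw [← Finset.prod_pow_eq_pow_sum, ← Finset.prod_mul_distrib]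
  refine Finset.prod_congr rfl fun k _ => ?_
  rw [map_upper x _ (hpe k), symPow_upper, ← pow_mul']


section Aux

/-- `dval i = ∑ i_k p^k`. -/
def dval (p l : ℕ) (i : tensorIdx p l) : ℕ :=
  ∑ k : Fin (Nat.digits p l).length, (i k : ℕ) * p ^ (k : ℕ)

/-- The top index (all digits maximal). -/
def topIdx (p l : ℕ) : tensorIdx p l := fun k => Fin.last _

lemma digits_sum (p l : ℕ) :
    ∑ k : Fin (Nat.digits p l).length, (Nat.digits p l).get k * p ^ (k : ℕ) = l := by
  rw [ofDigits_fin]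
  exact Nat.ofDigits_digits p l

lemma dval_le (p l : ℕ) (i : tensorIdx p l) : dval p l i ≤ l := by
  conv_rhs => rw [← digits_sum p l]
  exact Finset.sum_le_sum fun k _ => Nat.mul_le_mul_right _ (Fin.is_le (i k))

lemma digit_lt (p l : ℕ) (hp : 2 ≤ p) (k : Fin (Nat.digits p l).length) :
    (Nat.digits p l).get k < p :=
  Nat.digits_lt_base (by omega) (List.get_mem _ k)

lemma dval_inj (p l : ℕ) (hp : 2 ≤ p) : Function.Injective (dval p l) := by
  intro i i' h
  have := base_p_fin_inj hp (fun k => (i k : ℕ)) (fun k => (i' k : ℕ))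
    (fun k => lt_of_le_of_lt (Fin.is_le (i k)) (digit_lt p l hp k))
    (fun k => lt_of_le_of_lt (Fin.is_le (i' k)) (digit_lt p l hp k)) h
  funext k
  exact Fin.ext (congrFun this k)

lemma dval_top (p l : ℕ) : dval p l (topIdx p l) = l := by
  refine Eq.trans ?_ (digits_sum p l)
  exact Finset.sum_congr rfl fun k _ => by rw [topIdx, Fin.val_last]

lemma sub_dval (p l : ℕ) (i : tensorIdx p l) :
    ∑ k : Fin (Nat.digits p l).length, ((Nat.digits p l).get k - (i k : ℕ)) * p ^ (k : ℕ)
      = l - dval p l i := by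
  have key : (∑ k : Fin (Nat.digits p l).length,
      ((Nat.digits p l).get k - (i k : ℕ)) * p ^ (k : ℕ)) + dval p l i
      = ∑ k : Fin (Nat.digits p l).length, (Nat.digits p l).get k * p ^ (k : ℕ) := by
    rw [dval, ← Finset.sum_add_distrib]
    refine Finset.sum_congr rfl fun k _ => ?_
    rw [← Nat.add_mul, Nat.sub_add_cancel (Fin.is_le (i k))]
  have h2 := digits_sum p l
  have h3 := dval_le p l i
  omega

lemma chooseF_ne {p : ℕ} (hp : p.Prime) {F : Type*} [Field F] [CharP F p]
    {a b : ℕ} (hba : b ≤ a) (hap : a < p) : ((a.choose b : F)) ≠ 0 := by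
  rw [Ne, CharP.cast_eq_zero_iff F p]
  intro hdvd
  have : p ∣ a.factorial := by
    rw [← Nat.choose_mul_factorial_mul_factorial hba]
    exact dvd_mul_of_dvd_left (dvd_mul_of_dvd_left hdvd _) _
  exact absurd ((Nat.Prime.dvd_factorial hp).mp this) (by omega)

end Aux

section Steps

lemma step_one {p l : ℕ} (hp : 2 ≤ p) {F : Type*} [Field F] [Fintype F]
    (hl : l < Fintype.card F) (V : Submodule F (tensorIdx p l → F))
    (hV : ∀ x : F, ∀ v ∈ V, (rhoTensor p l !![1, 0; x, 1]).mulVec v ∈ V)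
    (v : tensorIdx p l → F) (hvV : v ∈ V) (hv0 : v ≠ 0) :
    Pi.single (topIdx p l) (1 : F) ∈ V := by
  classical
  set n : Fin (Nat.digits p l).length → ℕ := fun k => (Nat.digits p l).get k with hn
  obtain ⟨i0, hi0mem, hi0min⟩ := Finset.exists_min_image
    (Finset.univ.filter fun i => v i ≠ 0) (dval p l)
    (by
      obtain ⟨i, hi⟩ := Function.ne_iff.mp hv0
      exact ⟨i, Finset.mem_filter.mpr ⟨Finset.mem_univ _, hi⟩⟩)
  have hvi0 : v i0 ≠ 0 := (Finset.mem_filter.mp hi0mem).2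
  have hmin : ∀ i, v i ≠ 0 → dval p l i0 ≤ dval p l i := fun i hi =>
    hi0min i (Finset.mem_filter.mpr ⟨Finset.mem_univ _, hi⟩)
  set e : tensorIdx p l → tensorIdx p l → ℕ :=
    fun j i => ∑ k, ((j k : ℕ) - (i k : ℕ)) * p ^ (k : ℕ) with he
  set c : tensorIdx p l → tensorIdx p l → F :=
    fun j i => ∏ k, ((n k - (i k : ℕ)).choose (n k - (j k : ℕ)) : F) with hc
  have he_le : ∀ j i, e j i ≤ l := by
    intro j i
    rw [he]
    refine le_trans (Finset.sum_le_sum fun k _ => Nat.mul_le_mul_right _ ?_)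
      (le_of_eq (digits_sum p l))
    exact le_trans (Nat.sub_le _ _) (Fin.is_le (j k))
  set w : ℕ → (tensorIdx p l → F) :=
    fun d j => ∑ i, if e j i = d then c j i * v i else 0 with hw
  have hdecomp : ∀ x : F, (∑ d ∈ Finset.range (l + 1), x ^ d • w d)
      = (rhoTensor p l !![1, 0; x, 1]).mulVec v := by
    intro x
    funext j
    rw [Finset.sum_apply]
    simp only [Pi.smul_apply, smul_eq_mul, hw]
    rw [Matrix.mulVec]
    simp only [dotProduct]
    calc ∑ d ∈ Finset.range (l + 1), x ^ d * ∑ i, ite (e j i = d) (c j i * v i) 0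
        = ∑ d ∈ Finset.range (l + 1), ∑ i, ite (e j i = d) (x ^ d * (c j i * v i)) 0 := by
          refine Finset.sum_congr rfl fun d _ => ?_
          rw [Finset.mul_sum]
          exact Finset.sum_congr rfl fun i _ => by rw [mul_ite, mul_zero]
      _ = ∑ i, ∑ d ∈ Finset.range (l + 1), ite (e j i = d) (x ^ d * (c j i * v i)) 0 :=
          Finset.sum_comm
      _ = ∑ i, x ^ (e j i) * (c j i * v i) := by
          refine Finset.sum_congr rfl fun i _ => ?_
          rw [Finset.sum_ite_eq, if_pos (Finset.mem_range.mpr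
            (Nat.lt_succ_of_le (he_le j i)))]
      _ = ∑ i, rhoTensor p l !![1, 0; x, 1] j i * v i := by
          refine Finset.sum_congr rfl fun i _ => ?_
          rw [rho_lower p l hp x j i]
          show x ^ e j i * (c j i * v i) = c j i * x ^ e j i * v i
          ring
  have hwV : ∀ d ≤ l, w d ∈ V :=
    vand_extract V l hl w fun x => by rw [hdecomp x]; exact hV x v hvV
  have htople : dval p l i0 ≤ l := dval_le p l i0
  have hetop : ∀ i : tensorIdx p l, e (topIdx p l) i = l - dval p l i := by
    intro i
    rw [he]
    refine Eq.trans ?_ (sub_dval p l i)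
    refine Finset.sum_congr rfl fun k _ => ?_
    simp [topIdx, Fin.val_last, hn]
  have hkey : w (l - dval p l i0) = v i0 • (Pi.single (topIdx p l) 1 : tensorIdx p l → F) := by
    funext j
    simp only [hw, Pi.smul_apply, Pi.single_apply, smul_eq_mul, mul_ite, mul_one, mul_zero]
    by_cases hj : j = topIdx p l
    · rw [if_pos hj]
      subst hj
      rw [Finset.sum_eq_single_of_mem i0 (Finset.mem_univ _)]
      · rw [if_pos (hetop i0)]
        have hone : c (topIdx p l) i0 = 1 := by
          rw [hc]
          refine Finset.prod_eq_one fun k _ => ?_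
          simp [topIdx, Fin.val_last, hn, Nat.sub_self, Nat.choose_zero_right]
        rw [hone, one_mul]
      · intro i _ hi
        by_cases hvi : v i = 0
        · simp [hvi]
        · rw [if_neg]
          rw [hetop i]
          intro hcond
          have h2 := hmin i hvi
          have h3 := dval_le p l i
          have : dval p l i = dval p l i0 := by omega
          exact hi (dval_inj p l hp this)
    · rw [if_neg hj]
      refine Finset.sum_eq_zero fun i _ => ?_
      by_cases hvi : v i = 0
      · simp [hvi]
      by_cases hcz : c j i = 0
      · simp [hcz]
      rw [if_neg]
      intro hcond
      have hle : ∀ k, (i k : ℕ) ≤ (j k : ℕ) := by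
        intro k
        by_contra hlt
        push_neg at hlt
        apply hcz
        rw [hc]
        refine Finset.prod_eq_zero (Finset.mem_univ k) ?_
        have hjk : (j k : ℕ) ≤ n k := Fin.is_le _
        have hik : (i k : ℕ) ≤ n k := Fin.is_le _
        rw [Nat.choose_eq_zero_of_lt (by omega), Nat.cast_zero]
      have hsub : e j i + dval p l i = dval p l j := by
        rw [he, dval, ← Finset.sum_add_distrib]
        refine Finset.sum_congr rfl fun k _ => ?_
        rw [← Nat.add_mul, Nat.sub_add_cancel (hle k)]
      have h2 := hmin i hvi
      have h3 := dval_le p l j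
      have hjl : dval p l j = l := by omega
      exact hj (dval_inj p l hp (hjl.trans (dval_top p l).symm))
  have hmem := hwV (l - dval p l i0) (by omega)
  rw [hkey] at hmem
  have hmem2 := V.smul_mem (v i0)⁻¹ hmem
  rwa [smul_smul, inv_mul_cancel₀ hvi0, one_smul] at hmem2

end Steps

lemma step_two {p l : ℕ} (hp : p.Prime) {F : Type*} [Field F] [Fintype F] [CharP F p]
    (hl : l < Fintype.card F) (V : Submodule F (tensorIdx p l → F))
    (hV : ∀ x : F, ∀ v ∈ V, (rhoTensor p l !![1, x; 0, 1]).mulVec v ∈ V)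
    (htop : (Pi.single (topIdx p l) 1 : tensorIdx p l → F) ∈ V) : V = ⊤ := by
  classical
  have hp2 : 2 ≤ p := hp.two_le
  set u : tensorIdx p l → F := Pi.single (topIdx p l) 1 with hu
  set e : tensorIdx p l → tensorIdx p l → ℕ :=
    fun j i => ∑ k, ((i k : ℕ) - (j k : ℕ)) * p ^ (k : ℕ) with he
  set c : tensorIdx p l → tensorIdx p l → F :=
    fun j i => ∏ k, ((i k : ℕ).choose (j k : ℕ) : F) with hc
  have he_le : ∀ j i, e j i ≤ l := by
    intro j i
    rw [he]
    refine le_trans (Finset.sum_le_sum fun k _ => Nat.mul_le_mul_right _ ?_)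
      (le_of_eq (digits_sum p l))
    exact le_trans (Nat.sub_le _ _) (Fin.is_le (i k))
  set w : ℕ → (tensorIdx p l → F) :=
    fun d j => ∑ i, if e j i = d then c j i * u i else 0 with hw
  have hdecomp : ∀ x : F, (∑ d ∈ Finset.range (l + 1), x ^ d • w d)
      = (rhoTensor p l !![1, x; 0, 1]).mulVec u := by
    intro x
    funext j
    rw [Finset.sum_apply]
    simp only [Pi.smul_apply, smul_eq_mul, hw]
    rw [Matrix.mulVec]
    simp only [dotProduct]
    calc ∑ d ∈ Finset.range (l + 1), x ^ d * ∑ i, ite (e j i = d) (c j i * u i) 0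
        = ∑ d ∈ Finset.range (l + 1), ∑ i, ite (e j i = d) (x ^ d * (c j i * u i)) 0 := by
          refine Finset.sum_congr rfl fun d _ => ?_
          rw [Finset.mul_sum]
          exact Finset.sum_congr rfl fun i _ => by rw [mul_ite, mul_zero]
      _ = ∑ i, ∑ d ∈ Finset.range (l + 1), ite (e j i = d) (x ^ d * (c j i * u i)) 0 :=
          Finset.sum_comm
      _ = ∑ i, x ^ (e j i) * (c j i * u i) := by
          refine Finset.sum_congr rfl fun i _ => ?_
          rw [Finset.sum_ite_eq, if_pos (Finset.mem_range.mpr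
            (Nat.lt_succ_of_le (he_le j i)))]
      _ = ∑ i, rhoTensor p l !![1, x; 0, 1] j i * u i := by
          refine Finset.sum_congr rfl fun i _ => ?_
          rw [rho_upper p l hp2 x j i]
          show x ^ e j i * (c j i * u i) = c j i * x ^ e j i * u i
          ring
  have hwV : ∀ d ≤ l, w d ∈ V :=
    vand_extract V l hl w fun x => by rw [hdecomp x]; exact hV x u htop
  have hetop : ∀ j : tensorIdx p l, e j (topIdx p l) = l - dval p l j := by
    intro j
    rw [he]
    refine Eq.trans ?_ (sub_dval p l j)
    refine Finset.sum_congr rfl fun k _ => ?_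
    simp [topIdx, Fin.val_last]
  have hbasis : ∀ j0 : tensorIdx p l, (Pi.single j0 1 : tensorIdx p l → F) ∈ V := by
    intro j0
    have hc0 : c j0 (topIdx p l) ≠ 0 := by
      rw [hc, Finset.prod_ne_zero_iff]
      intro k _
      show (((topIdx p l k : ℕ)).choose (j0 k : ℕ) : F) ≠ 0
      rw [topIdx, Fin.val_last]
      exact chooseF_ne hp (Fin.is_le _) (digit_lt p l hp2 k)
    have hkey : w (l - dval p l j0)
        = c j0 (topIdx p l) • (Pi.single j0 1 : tensorIdx p l → F) := by
      funext j
      simp only [hw, Pi.smul_apply, Pi.single_apply, smul_eq_mul, mul_ite, mul_one, mul_zero]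
      rw [Finset.sum_eq_single_of_mem (topIdx p l) (Finset.mem_univ _)]
      · rw [hetop j, hu, Pi.single_eq_same, mul_one]
        by_cases hjj : j = j0
        · subst hjj
          rw [if_pos rfl, if_pos rfl]
        · rw [if_neg hjj, if_neg]
          intro hcond
          have h1 := dval_le p l j
          have h2 := dval_le p l j0
          have h3 : dval p l j = dval p l j0 := by omega
          exact hjj (dval_inj p l hp2 h3)
      · intro i _ hi
        rw [hu, Pi.single_eq_of_ne hi, mul_zero, ite_self]
    have hmem := hwV (l - dval p l j0) (by omega)
    rw [hkey] at hmem
    have hmem2 := V.smul_mem (c j0 (topIdx p l))⁻¹ hmem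
    rwa [smul_smul, inv_mul_cancel₀ hc0, one_smul] at hmem2
  rw [Submodule.eq_top_iff']
  intro x
  rw [pi_eq_sum_univ x]
  refine Submodule.sum_smul_mem V _ fun i _ => ?_
  have hb : (fun j => if i = j then (1 : F) else 0) = (Pi.single i 1 : tensorIdx p l → F) := by
    funext j'
    rw [Pi.single_apply]
    simp [eq_comm]
  rw [hb]
  exact hbasis i

/-- Brauer–Nesbitt: for `l < q' = p^f`, the restriction `ρ̄_l` of
`ρ_l^I = ρ_{l_0} ⊗ ρ_{l_1}^{(1)} ⊗ ⋯ ⊗ ρ_{l_s}^{(s)}` to `SL_2(F_{q'})` is irreducible. -/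
theorem stmt10 (p : ℕ) (hp : p.Prime) (F : Type*) [Field F] [Fintype F] [CharP F p]
    (l : ℕ) (hl : l < Fintype.card F) :
    ∀ V : Submodule F (tensorIdx p l → F),
      (∀ γ : Matrix.SpecialLinearGroup (Fin 2) F, ∀ v ∈ V,
        (rhoTensor p l (γ : Matrix (Fin 2) (Fin 2) F)).mulVec v ∈ V) →
      V = ⊥ ∨ V = ⊤ := by
  intro V hV
  by_cases hbot : V = ⊥
  · exact Or.inl hbot
  right
  have hp2 : 2 ≤ p := hp.two_le
  obtain ⟨v, hvV, hv0⟩ := (Submodule.ne_bot_iff V).mp hbot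
  have hVL : ∀ x : F, ∀ u ∈ V, (rhoTensor p l !![1, 0; x, 1]).mulVec u ∈ V := by
    intro x u hu
    exact hV ⟨!![1, 0; x, 1], by simp [Matrix.det_fin_two_of]⟩ u hu
  have hVU : ∀ x : F, ∀ u ∈ V, (rhoTensor p l !![1, x; 0, 1]).mulVec u ∈ V := by
    intro x u hu
    exact hV ⟨!![1, x; 0, 1], by simp [Matrix.det_fin_two_of]⟩ u hu
  exact step_two hp hl V hVU (step_one hp2 hl V hVL v hvV hv0)
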